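/- Let p, q be real numbers with 1 < p < q, let a > 0 and b ≥ 0 be reals, and let ψ : (0, +∞) → ℝ be differentiable such that t ↦ ψ′(t)/t^{q-1} is strictly increasing on (0, +∞). Define k(t) = (a/p)t^p + (b/q)t^q − ψ(t) for t > 0. If k′(1) = 0, then k(t) ≤ k(1) for all t > 0, with strict inequality k(t) < k(1) whenever t ≠ 1. -/

import Mathlib

/-- Scalar lemma behind Proposition 5.2: for `1 < p < q`, `a > 0`, `b ≥ 0` and a
differentiable `ψ` with `ψ′(t)/t^{q-1}` strictly increasing on `(0,∞)`, if
`k(t) = (a/p)t^p + (b/q)t^q − ψ(t)` has `k′(1) = 0`, then `k(t) ≤ k(1)` for all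
`t > 0`, with strict inequality for `t ≠ 1`. -/
theorem fiber_max_at_one (p q : ℝ) (hp : 1 < p) (hpq : p < q)
    (a b : ℝ) (ha : 0 < a) (hb : 0 ≤ b) (ψ ψ' : ℝ → ℝ)
    (hψ : ∀ t : ℝ, 0 < t → HasDerivAt ψ (ψ' t) t)
    (hmono : StrictMonoOn (fun t => ψ' t / t ^ (q - 1)) (Set.Ioi (0 : ℝ)))
    (hcrit : HasDerivAt (fun t : ℝ => a / p * t ^ p + b / q * t ^ q - ψ t) 0 1) :
    ∀ t : ℝ, 0 < t →
      (a / p * t ^ p + b / q * t ^ q - ψ t ≤ a / p * 1 ^ p + b / q * 1 ^ q - ψ 1) ∧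
      (t ≠ 1 → a / p * t ^ p + b / q * t ^ q - ψ t < a / p * 1 ^ p + b / q * 1 ^ q - ψ 1) := by
  have hp0 : (0:ℝ) < p := by linarith
  have hq0 : (0:ℝ) < q := by linarith
  set k : ℝ → ℝ := fun t => a / p * t ^ p + b / q * t ^ q - ψ t with hkdef
  -- the derivative of k
  have hkderiv : ∀ t : ℝ, 0 < t →
      HasDerivAt k (a * t ^ (p - 1) + b * t ^ (q - 1) - ψ' t) t := by
    intro t ht
    have h1 : HasDerivAt (fun x : ℝ => x ^ p) (p * t ^ (p - 1)) t :=
      Real.hasDerivAt_rpow_const (Or.inl ht.ne')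
    have h2 : HasDerivAt (fun x : ℝ => x ^ q) (q * t ^ (q - 1)) t :=
      Real.hasDerivAt_rpow_const (Or.inl ht.ne')
    have h := ((h1.const_mul (a / p)).add (h2.const_mul (b / q))).sub (hψ t ht)
    have e1 : a / p * (p * t ^ (p - 1)) = a * t ^ (p - 1) := by
      rw [← mul_assoc, div_mul_cancel₀ _ hp0.ne']
    have e2 : b / q * (q * t ^ (q - 1)) = b * t ^ (q - 1) := by
      rw [← mul_assoc, div_mul_cancel₀ _ hq0.ne']
    rw [e1, e2] at h
    exact h
  have hψ1 : ψ' 1 = a + b := by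
    have h := hcrit.unique (hkderiv 1 one_pos)
    simp [Real.one_rpow] at h
    linarith
  -- the auxiliary strictly decreasing function
  have hg : StrictAntiOn (fun t : ℝ => a * t ^ (p - q) + b - ψ' t / t ^ (q - 1))
      (Set.Ioi (0:ℝ)) := by
    intro x hx y hy hxy
    have h1 : a * y ^ (p - q) < a * x ^ (p - q) :=
      mul_lt_mul_of_pos_left
        (Real.rpow_lt_rpow_of_neg hx hxy (by linarith)) ha
    have h2 : ψ' x / x ^ (q - 1) < ψ' y / y ^ (q - 1) := hmono hx hy hxy
    show a * y ^ (p - q) + b - ψ' y / y ^ (q - 1)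
        < a * x ^ (p - q) + b - ψ' x / x ^ (q - 1)
    linarith
  have hg1 : a * (1:ℝ) ^ (p - q) + b - ψ' 1 / (1:ℝ) ^ (q - 1) = 0 := by
    simp [Real.one_rpow, hψ1]
  -- sign of the derivative
  have hsign : ∀ t : ℝ, 0 < t →
      (t < 1 → 0 < a * t ^ (p - 1) + b * t ^ (q - 1) - ψ' t) ∧
      (1 < t → a * t ^ (p - 1) + b * t ^ (q - 1) - ψ' t < 0) := by
    intro t ht
    have htq : (0:ℝ) < t ^ (q - 1) := Real.rpow_pos_of_pos ht _
    have key : (a * t ^ (p - q) + b - ψ' t / t ^ (q - 1)) * t ^ (q - 1)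
        = a * t ^ (p - 1) + b * t ^ (q - 1) - ψ' t := by
      have hmul : t ^ (p - q) * t ^ (q - 1) = t ^ (p - 1) := by
        rw [← Real.rpow_add ht]; ring_nf
      have hdiv : ψ' t / t ^ (q - 1) * t ^ (q - 1) = ψ' t :=
        div_mul_cancel₀ _ htq.ne'
      calc (a * t ^ (p - q) + b - ψ' t / t ^ (q - 1)) * t ^ (q - 1)
          = a * (t ^ (p - q) * t ^ (q - 1)) + b * t ^ (q - 1)
            - ψ' t / t ^ (q - 1) * t ^ (q - 1) := by ring
        _ = a * t ^ (p - 1) + b * t ^ (q - 1) - ψ' t := by rw [hmul, hdiv]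
    constructor
    · intro ht1
      have := hg (Set.mem_Ioi.mpr ht) (Set.mem_Ioi.mpr one_pos) ht1
      dsimp at this
      rw [hg1] at this
      nlinarith [mul_pos this htq]
    · intro ht1
      have := hg (Set.mem_Ioi.mpr one_pos) (Set.mem_Ioi.mpr ht) ht1
      dsimp at this
      rw [hg1] at this
      nlinarith [mul_pos (neg_pos.mpr this) htq]
  -- k is strictly increasing on (0,1]
  have hcont : ∀ s : Set ℝ, s ⊆ Set.Ioi (0:ℝ) → ContinuousOn k s := by
    intro s hs x hx
    exact ((hkderiv x (hs hx)).continuousAt).continuousWithinAt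
  have hmonok : StrictMonoOn k (Set.Ioc (0:ℝ) 1) := by
    apply strictMonoOn_of_deriv_pos (convex_Ioc 0 1)
      (hcont _ (fun x hx => hx.1))
    intro x hx
    rw [interior_Ioc] at hx
    rw [(hkderiv x hx.1).deriv]
    exact (hsign x hx.1).1 hx.2
  have hantik : StrictAntiOn k (Set.Ici (1:ℝ)) := by
    apply strictAntiOn_of_deriv_neg (convex_Ici 1)
      (hcont _ (fun x hx => Set.mem_Ioi.mpr (lt_of_lt_of_le one_pos (Set.mem_Ici.mp hx))))
    intro x hx
    rw [interior_Ici] at hx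
    rw [(hkderiv x (lt_trans one_pos hx)).deriv]
    exact (hsign x (lt_trans one_pos hx)).2 hx
  intro t ht
  have hstrict : t ≠ 1 → k t < k 1 := by
    intro hne
    rcases lt_or_gt_of_ne hne with h | h
    · exact hmonok ⟨ht, h.le⟩ ⟨one_pos, le_refl 1⟩ h
    · exact hantik (Set.mem_Ici.mpr (le_refl 1)) (Set.mem_Ici.mpr h.le) h
  constructor
  · by_cases h : t = 1
    · subst h; exact le_refl _
    · exact (hstrict h).le
  · exact hstrict
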